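/- Sparsity upper bound for discrete LIF: for every f ∈ ℝ^{N+1}, β ∈ (0,1], and θ > 0, the output spike train s = LIF_{β,θ}(f) satisfies ∑_k |s_k| ≤ ∑_k |f_k|, i.e., ‖LIF_{β,θ}(f)‖_1 ≤ ‖f‖_1. -/

import Mathlib

/-- Truncation quantization toward zero to multiples of `θ`. -/
noncomputable def q (θ z : ℝ) : ℝ := Real.sign z * (θ * (⌊|z| / θ⌋ : ℤ))

/-- Membrane potential of the discrete LIF recursion with subtraction reset;
the spike output at step `n` is `q θ (lifZ θ β f n)`. -/
noncomputable def lifZ (θ β : ℝ) (f : ℕ → ℝ) : ℕ → ℝ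
  | 0 => f 0
  | k + 1 => f (k + 1) + β * (lifZ θ β f k - q θ (lifZ θ β f k))

lemma q_key (θ z : ℝ) (hθ : 0 < θ) : |z - q θ z| = |z| - |q θ z| := by
  have hm0 : (0 : ℝ) ≤ (⌊|z| / θ⌋ : ℤ) := by
    have : (0:ℝ) ≤ |z| / θ := div_nonneg (abs_nonneg z) hθ.le
    exact_mod_cast Int.floor_nonneg.mpr this
  have hle : θ * (⌊|z| / θ⌋ : ℤ) ≤ |z| := by
    have := Int.floor_le (|z| / θ)
    calc θ * (⌊|z| / θ⌋ : ℤ) ≤ θ * (|z| / θ) := by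
          exact mul_le_mul_of_nonneg_left this hθ.le
      _ = |z| := by field_simp
  have hq0 : (0:ℝ) ≤ θ * (⌊|z| / θ⌋ : ℤ) := mul_nonneg hθ.le hm0
  set m : ℝ := θ * (⌊|z| / θ⌋ : ℤ) with hm
  rcases lt_trichotomy z 0 with hz | hz | hz
  · have hs : Real.sign z = -1 := Real.sign_of_neg hz
    have habs : |z| = -z := abs_of_neg hz
    unfold q
    rw [hs, ← hm, neg_one_mul]
    have h1 : z - -m ≤ 0 := by linarith [habs ▸ hle]
    rw [abs_of_nonpos h1, abs_of_nonpos (by linarith : -m ≤ 0), habs]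
    ring
  · simp [q, hz]
  · have hs : Real.sign z = 1 := Real.sign_of_pos hz
    have habs : |z| = z := abs_of_pos hz
    unfold q
    rw [hs, ← hm, one_mul,
      abs_of_nonneg (by linarith [habs ▸ hle] : (0:ℝ) ≤ z - m), abs_of_nonneg hq0, habs]

lemma q_abs_le (θ z : ℝ) (hθ : 0 < θ) : |q θ z| ≤ |z| := by
  have := q_key θ z hθ
  have h2 := abs_nonneg (z - q θ z)
  linarith

theorem lif_sparsity_upper_bound (θ β : ℝ) (hθ : 0 < θ) (hβ : β ∈ Set.Ioc (0 : ℝ) 1)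
    (N : ℕ) (f : ℕ → ℝ) :
    ∑ k ∈ Finset.range (N + 1), |q θ (lifZ θ β f k)| ≤
      ∑ k ∈ Finset.range (N + 1), |f k| := by
  obtain ⟨hβ0, hβ1⟩ := hβ
  have key : ∀ n : ℕ, ∑ k ∈ Finset.range (n + 1), |q θ (lifZ θ β f k)| +
      (|lifZ θ β f n| - |q θ (lifZ θ β f n)|) ≤ ∑ k ∈ Finset.range (n + 1), |f k| := by
    intro n
    induction n with
    | zero => simp [lifZ]
    | succ m ih =>
      have hres : |lifZ θ β f m - q θ (lifZ θ β f m)| =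
          |lifZ θ β f m| - |q θ (lifZ θ β f m)| := q_key θ _ hθ
      have hresnn : (0:ℝ) ≤ |lifZ θ β f m| - |q θ (lifZ θ β f m)| := by
        have := abs_nonneg (lifZ θ β f m - q θ (lifZ θ β f m)); linarith
      have hz : |lifZ θ β f (m+1)| ≤ |f (m+1)| + (|lifZ θ β f m| - |q θ (lifZ θ β f m)|) := by
        have h1 : |lifZ θ β f (m+1)| ≤ |f (m+1)| + |β * (lifZ θ β f m - q θ (lifZ θ β f m))| :=
          abs_add_le _ _
        have h2 : |β * (lifZ θ β f m - q θ (lifZ θ β f m))| =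
            β * (|lifZ θ β f m| - |q θ (lifZ θ β f m)|) := by
          rw [abs_mul, abs_of_pos hβ0, hres]
        nlinarith
      rw [Finset.sum_range_succ, Finset.sum_range_succ (f := fun k => |f k|)]
      have := ih
      linarith
  have h := key N
  have hnn : (0:ℝ) ≤ |lifZ θ β f N| - |q θ (lifZ θ β f N)| := by
    have := abs_nonneg (lifZ θ β f N - q θ (lifZ θ β f N))
    have := q_key θ (lifZ θ β f N) hθ
    linarith
  linarith
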